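/- The 7-vertex graph consisting of a triangle {1,2,3}, a vertex 4, and paths 1-5-4, 2-6-4, 3-7-4 (i.e., edges 12, 13, 23, 15, 54, 26, 64, 37, 74) is not complementary vanishing. -/
import Mathlib

/-- `A ∈ S(G)`: real symmetric matrix whose off-diagonal nonzero pattern is `E(G)`. -/
def MatIn {V : Type*} [Fintype V] (G : SimpleGraph V) (A : Matrix V V ℝ) : Prop :=
  A.IsSymm ∧ ∀ i j : V, i ≠ j → (A i j ≠ 0 ↔ G.Adj i j)

/-- `G` is complementary vanishing. -/
def CompVan {V : Type*} [Fintype V] (G : SimpleGraph V) : Prop :=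
  ∃ A B : Matrix V V ℝ, MatIn G A ∧ MatIn Gᶜ B ∧ A * B = 0

theorem stmt_19 :
    ¬ CompVan (SimpleGraph.fromEdgeSet
      {s(0, 1), s(0, 2), s(1, 2), s(0, 4), s(4, 3), s(1, 5), s(5, 3), s(2, 6), s(6, 3)}
      : SimpleGraph (Fin 7)) := by
  rintro ⟨A, B, ⟨hAs, hA⟩, ⟨hBs, hB⟩, hAB⟩
  have adj : ∀ i j : Fin 7, i ≠ j →
      ((SimpleGraph.fromEdgeSet
        {s(0, 1), s(0, 2), s(1, 2), s(0, 4), s(4, 3), s(1, 5), s(5, 3), s(2, 6), s(6, 3)}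
        : SimpleGraph (Fin 7)).Adj i j ↔
        (i, j) ∈ ([(0,1),(1,0),(0,2),(2,0),(1,2),(2,1),(0,4),(4,0),(4,3),(3,4),(1,5),(5,1),(5,3),(3,5),(2,6),(6,2),(6,3),(3,6)] : List (Fin 7 × Fin 7))) := by
    intro i j hij
    rw [SimpleGraph.fromEdgeSet_adj]
    simp only [Set.mem_insert_iff, Set.mem_singleton_iff, Sym2.eq, Sym2.rel_iff',
      Prod.mk.injEq, Prod.swap_prod_mk, List.mem_cons, List.not_mem_nil, or_false]
    constructor
    · rintro ⟨h, -⟩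
      rcases h with (⟨h1,h2⟩|⟨h1,h2⟩)|(⟨h1,h2⟩|⟨h1,h2⟩)|(⟨h1,h2⟩|⟨h1,h2⟩)|(⟨h1,h2⟩|⟨h1,h2⟩)|(⟨h1,h2⟩|⟨h1,h2⟩)|(⟨h1,h2⟩|⟨h1,h2⟩)|(⟨h1,h2⟩|⟨h1,h2⟩)|(⟨h1,h2⟩|⟨h1,h2⟩)|(⟨h1,h2⟩|⟨h1,h2⟩) <;>
        subst h1 <;> subst h2 <;> simp
    · intro h
      refine ⟨?_, hij⟩
      rcases h with h|h|h|h|h|h|h|h|h|h|h|h|h|h|h|h|h|h <;>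
        (obtain ⟨h1, h2⟩ := h; subst h1; subst h2; simp)
  have An : ∀ i j : Fin 7, i ≠ j →
      (i, j) ∈ ([(0,1),(1,0),(0,2),(2,0),(1,2),(2,1),(0,4),(4,0),(4,3),(3,4),(1,5),(5,1),(5,3),(3,5),(2,6),(6,2),(6,3),(3,6)] : List (Fin 7 × Fin 7)) → A i j ≠ 0 :=
    fun i j h1 h2 => (hA i j h1).mpr ((adj i j h1).mpr h2)
  have Az : ∀ i j : Fin 7, i ≠ j →
      (i, j) ∉ ([(0,1),(1,0),(0,2),(2,0),(1,2),(2,1),(0,4),(4,0),(4,3),(3,4),(1,5),(5,1),(5,3),(3,5),(2,6),(6,2),(6,3),(3,6)] : List (Fin 7 × Fin 7)) → A i j = 0 :=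
    fun i j h1 h2 => not_not.mp (fun hn => h2 ((adj i j h1).mp ((hA i j h1).mp hn)))
  have Bn : ∀ i j : Fin 7, i ≠ j →
      (i, j) ∉ ([(0,1),(1,0),(0,2),(2,0),(1,2),(2,1),(0,4),(4,0),(4,3),(3,4),(1,5),(5,1),(5,3),(3,5),(2,6),(6,2),(6,3),(3,6)] : List (Fin 7 × Fin 7)) → B i j ≠ 0 :=
    fun i j h1 h2 => (hB i j h1).mpr ((SimpleGraph.compl_adj _ _ _).mpr ⟨h1, fun ha => h2 ((adj i j h1).mp ha)⟩)
  have Bz : ∀ i j : Fin 7, i ≠ j →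
      (i, j) ∈ ([(0,1),(1,0),(0,2),(2,0),(1,2),(2,1),(0,4),(4,0),(4,3),(3,4),(1,5),(5,1),(5,3),(3,5),(2,6),(6,2),(6,3),(3,6)] : List (Fin 7 × Fin 7)) → B i j = 0 :=
    fun i j h1 h2 => not_not.mp (fun hn =>
      ((SimpleGraph.compl_adj _ _ _).mp ((hB i j h1).mp hn)).2 ((adj i j h1).mpr h2))
  have hAn01 : A 0 1 ≠ 0 := An 0 1 (by decide) (by decide)
  have hAn02 : A 0 2 ≠ 0 := An 0 2 (by decide) (by decide)
  have hAn12 : A 1 2 ≠ 0 := An 1 2 (by decide) (by decide)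
  have hAn40 : A 4 0 ≠ 0 := An 4 0 (by decide) (by decide)
  have hAn43 : A 4 3 ≠ 0 := An 4 3 (by decide) (by decide)
  have hAn51 : A 5 1 ≠ 0 := An 5 1 (by decide) (by decide)
  have hAn53 : A 5 3 ≠ 0 := An 5 3 (by decide) (by decide)
  have hAn62 : A 6 2 ≠ 0 := An 6 2 (by decide) (by decide)
  have hAn63 : A 6 3 ≠ 0 := An 6 3 (by decide) (by decide)
  have hAz03 : A 0 3 = 0 := Az 0 3 (by decide) (by decide)
  have hAz05 : A 0 5 = 0 := Az 0 5 (by decide) (by decide)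
  have hAz06 : A 0 6 = 0 := Az 0 6 (by decide) (by decide)
  have hAz13 : A 1 3 = 0 := Az 1 3 (by decide) (by decide)
  have hAz14 : A 1 4 = 0 := Az 1 4 (by decide) (by decide)
  have hAz16 : A 1 6 = 0 := Az 1 6 (by decide) (by decide)
  have hAz23 : A 2 3 = 0 := Az 2 3 (by decide) (by decide)
  have hAz24 : A 2 4 = 0 := Az 2 4 (by decide) (by decide)
  have hAz25 : A 2 5 = 0 := Az 2 5 (by decide) (by decide)
  have hAz41 : A 4 1 = 0 := Az 4 1 (by decide) (by decide)
  have hAz42 : A 4 2 = 0 := Az 4 2 (by decide) (by decide)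
  have hAz45 : A 4 5 = 0 := Az 4 5 (by decide) (by decide)
  have hAz46 : A 4 6 = 0 := Az 4 6 (by decide) (by decide)
  have hAz50 : A 5 0 = 0 := Az 5 0 (by decide) (by decide)
  have hAz52 : A 5 2 = 0 := Az 5 2 (by decide) (by decide)
  have hAz54 : A 5 4 = 0 := Az 5 4 (by decide) (by decide)
  have hAz56 : A 5 6 = 0 := Az 5 6 (by decide) (by decide)
  have hAz60 : A 6 0 = 0 := Az 6 0 (by decide) (by decide)
  have hAz61 : A 6 1 = 0 := Az 6 1 (by decide) (by decide)
  have hAz64 : A 6 4 = 0 := Az 6 4 (by decide) (by decide)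
  have hAz65 : A 6 5 = 0 := Az 6 5 (by decide) (by decide)
  have hBn30 : B 3 0 ≠ 0 := Bn 3 0 (by decide) (by decide)
  have hBn31 : B 3 1 ≠ 0 := Bn 3 1 (by decide) (by decide)
  have hBn32 : B 3 2 ≠ 0 := Bn 3 2 (by decide) (by decide)
  have hBn03 : B 0 3 ≠ 0 := Bn 0 3 (by decide) (by decide)
  have hBn13 : B 1 3 ≠ 0 := Bn 1 3 (by decide) (by decide)
  have hBn23 : B 2 3 ≠ 0 := Bn 2 3 (by decide) (by decide)
  have hBz10 : B 1 0 = 0 := Bz 1 0 (by decide) (by decide)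
  have hBz20 : B 2 0 = 0 := Bz 2 0 (by decide) (by decide)
  have hBz40 : B 4 0 = 0 := Bz 4 0 (by decide) (by decide)
  have hBz01 : B 0 1 = 0 := Bz 0 1 (by decide) (by decide)
  have hBz21 : B 2 1 = 0 := Bz 2 1 (by decide) (by decide)
  have hBz51 : B 5 1 = 0 := Bz 5 1 (by decide) (by decide)
  have hBz02 : B 0 2 = 0 := Bz 0 2 (by decide) (by decide)
  have hBz12 : B 1 2 = 0 := Bz 1 2 (by decide) (by decide)
  have hBz62 : B 6 2 = 0 := Bz 6 2 (by decide) (by decide)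
  have hBz43 : B 4 3 = 0 := Bz 4 3 (by decide) (by decide)
  have hBz53 : B 5 3 = 0 := Bz 5 3 (by decide) (by decide)
  have hBz63 : B 6 3 = 0 := Bz 6 3 (by decide) (by decide)
  have e1 := congrFun (congrFun hAB 0) 0
  have e2 := congrFun (congrFun hAB 4) 0
  have e3 := congrFun (congrFun hAB 1) 1
  have e4 := congrFun (congrFun hAB 5) 1
  have e5 := congrFun (congrFun hAB 2) 2
  have e6 := congrFun (congrFun hAB 6) 2
  have e7 := congrFun (congrFun hAB 0) 3
  have e8 := congrFun (congrFun hAB 1) 3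
  have e9 := congrFun (congrFun hAB 2) 3
  simp only [Matrix.mul_apply, Fin.sum_univ_seven, Matrix.zero_apply,
    hAz03, hAz05, hAz06, hAz13, hAz14, hAz16, hAz23, hAz24, hAz25, hAz41, hAz42, hAz45, hAz46, hAz50, hAz52, hAz54, hAz56, hAz60, hAz61, hAz64, hAz65, hBz10, hBz20, hBz40, hBz01, hBz21, hBz51, hBz02, hBz12, hBz62, hBz43, hBz53, hBz63,
    zero_mul, mul_zero, add_zero, zero_add] at e1 e2 e3 e4 e5 e6 e7 e8 e9
  -- e2 : A 4 0 * B 0 0 + A 4 3 * B 3 0 = 0  gives B 0 0 ≠ 0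
  have hB00 : B 0 0 ≠ 0 := by
    intro h0
    rw [h0, mul_zero, zero_add] at e2
    exact (mul_ne_zero hAn43 hBn30) e2
  have ha0 : A 0 0 = 0 := by
    rcases mul_eq_zero.mp e1 with h | h
    · exact h
    · exact absurd h hB00
  have hB11 : B 1 1 ≠ 0 := by
    intro h0
    rw [h0, mul_zero, zero_add] at e4
    exact (mul_ne_zero hAn53 hBn31) e4
  have ha1 : A 1 1 = 0 := by
    rcases mul_eq_zero.mp e3 with h | h
    · exact h
    · exact absurd h hB11
  have hB22 : B 2 2 ≠ 0 := by
    intro h0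
    rw [h0, mul_zero, zero_add] at e6
    exact (mul_ne_zero hAn63 hBn32) e6
  have ha2 : A 2 2 = 0 := by
    rcases mul_eq_zero.mp e5 with h | h
    · exact h
    · exact absurd h hB22
  have hs10 : A 1 0 = A 0 1 := hAs.apply 0 1
  have hs20 : A 2 0 = A 0 2 := hAs.apply 0 2
  have hs21 : A 2 1 = A 1 2 := hAs.apply 1 2
  rw [ha0, zero_mul, zero_add] at e7
  rw [ha1, zero_mul, add_zero] at e8
  rw [ha2, zero_mul, add_zero] at e9
  rw [hs10] at e8
  rw [hs20, hs21] at e9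
  -- e7 : A 0 1 * B 1 3 + A 0 2 * B 2 3 = 0
  -- e8 : A 0 1 * B 0 3 + A 1 2 * B 2 3 = 0
  -- e9 : A 0 2 * B 0 3 + A 1 2 * B 1 3 = 0
  have key : A 1 2 * (A 0 2 * B 2 3 - A 0 1 * B 1 3) = 0 := by
    linear_combination A 0 2 * e8 - A 0 1 * e9
  have h2 : A 0 2 * B 2 3 = A 0 1 * B 1 3 := by
    rcases mul_eq_zero.mp key with h | h
    · exact absurd h hAn12
    · linarith
  have hfin : A 0 2 * B 2 3 = 0 := by linarith [e7, h2]
  exact (mul_ne_zero hAn02 hBn23) hfin
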